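/- arXiv:math/9911227 — 2 statements merged into one kernel-verified Lean document; each statement's English description precedes it below -/
import Mathlib

section
/- If G is a connected bipartite graph, then the following are equivalent: (i) G is α⁻-stable; (ii) μ(G − e) = μ(G) for every edge e of G; (iii) no edge of G is contained in every maximum matching of G (the intersection of all maximum matchings of G is empty). -/
open Finset

variable {V : Type*}

/-- A stable (independent) set of vertices of `G`. -/
def IsStableSet (G : SimpleGraph V) (S : Finset V) : Prop :=
  ∀ u ∈ S, ∀ v ∈ S, ¬ G.Adj u v

/-- The stability number `α(G)`: the maximum cardinality of a stable set. -/
noncomputable def stabNum (G : SimpleGraph V) [Fintype V] : ℕ :=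
  sSup {n : ℕ | ∃ S : Finset V, IsStableSet G S ∧ S.card = n}

/-- A stability system of `G`: a stable set of maximum cardinality. -/
def IsStabSystem (G : SimpleGraph V) [Fintype V] (S : Finset V) : Prop :=
  IsStableSet G S ∧ S.card = stabNum G

/-- `G` is α⁻-stable: deleting any edge leaves the stability number unchanged. -/
def AlphaMinusStable (G : SimpleGraph V) [Fintype V] : Prop :=
  ∀ u v : V, G.Adj u v → stabNum (G.deleteEdges {s(u, v)}) = stabNum G

/-- `G` is α⁺-stable: adding any edge of the complement leaves the stability
number unchanged. -/
def AlphaPlusStable (G : SimpleGraph V) [Fintype V] : Prop :=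
  ∀ u v : V, u ≠ v → ¬ G.Adj u v →
    stabNum (G ⊔ SimpleGraph.fromEdgeSet {s(u, v)}) = stabNum G

/-- A matching of `G`, viewed as a set of pairwise non-incident edges. -/
def IsMatchingSet (G : SimpleGraph V) (M : Finset (Sym2 V)) : Prop :=
  (↑M : Set (Sym2 V)) ⊆ G.edgeSet ∧
    ∀ e ∈ M, ∀ f ∈ M, e ≠ f → ∀ v : V, ¬ (v ∈ e ∧ v ∈ f)

/-- The matching number `μ(G)`. -/
noncomputable def matchNum (G : SimpleGraph V) [Fintype V] : ℕ :=
  sSup {n : ℕ | ∃ M : Finset (Sym2 V), IsMatchingSet G M ∧ M.card = n}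

/-- A maximum matching of `G`. -/
def IsMaximumMatching (G : SimpleGraph V) [Fintype V] (M : Finset (Sym2 V)) : Prop :=
  IsMatchingSet G M ∧ M.card = matchNum G

/-- A perfect matching of `G`: a matching covering every vertex. -/
def IsPerfectMatchingSet (G : SimpleGraph V) (M : Finset (Sym2 V)) : Prop :=
  IsMatchingSet G M ∧ ∀ v : V, ∃ e ∈ M, v ∈ e

/-- A pendant vertex: a vertex of degree one. -/
def IsPendant (G : SimpleGraph V) (v : V) : Prop :=
  (G.neighborSet v).ncard = 1

/-- A set `D` is 2-dominating: every vertex outside `D` has at least two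
neighbors in `D`. -/
def Is2Dominating (G : SimpleGraph V) (D : Finset V) : Prop :=
  ∀ v : V, v ∉ D → 2 ≤ ({u : V | u ∈ D ∧ G.Adj v u}).ncard

/-- A chordal graph: no induced cycle on four or more vertices. -/
def IsChordal (G : SimpleGraph V) : Prop :=
  ∀ n : ℕ, 4 ≤ n → IsEmpty (SimpleGraph.cycleGraph n ↪g G)

/-- A bipartite graph: the vertex set is partitioned into two stable sets. -/
def IsBipartiteGr (G : SimpleGraph V) [Fintype V] [DecidableEq V] : Prop :=
  ∃ C : Finset V, IsStableSet G C ∧ IsStableSet G Cᶜ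

/-- A strong unique independence graph: a graph with a unique stability system
whose complement is also stable. -/
def IsStrongUniqueIndep (G : SimpleGraph V) [Fintype V] [DecidableEq V] : Prop :=
  ∃ S : Finset V, IsStabSystem G S ∧ (∀ S' : Finset V, IsStabSystem G S' → S' = S) ∧
    IsStableSet G Sᶜ

/-- A bistable bipartite graph: its two color classes are its only two
stability systems. -/
def IsBistable (G : SimpleGraph V) [Fintype V] [DecidableEq V] : Prop :=
  ∃ A : Finset V, IsStableSet G A ∧ IsStableSet G Aᶜ ∧
    IsStabSystem G A ∧ IsStabSystem G Aᶜ ∧ A ≠ Aᶜ ∧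
    ∀ S : Finset V, IsStabSystem G S → S = A ∨ S = Aᶜ

/-- A vertex cover of `G`. -/
def IsVertexCover (G : SimpleGraph V) (C : Finset V) : Prop :=
  ∀ u v : V, G.Adj u v → u ∈ C ∨ v ∈ C

/-- A minimum vertex cover of `G`. -/
def IsMinVertexCover (G : SimpleGraph V) [Fintype V] (C : Finset V) : Prop :=
  IsVertexCover G C ∧ ∀ C' : Finset V, IsVertexCover G C' → C.card ≤ C'.card


section Aux

open SimpleGraph

variable {V : Type*} [Fintype V] [DecidableEq V]

private lemma stab_bdd (G : SimpleGraph V) :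
    BddAbove {n : ℕ | ∃ S : Finset V, IsStableSet G S ∧ S.card = n} := by
  refine ⟨Fintype.card V, ?_⟩
  rintro n ⟨S, -, rfl⟩
  exact S.card_le_univ.trans_eq Finset.card_univ

private lemma match_bdd (G : SimpleGraph V) :
    BddAbove {n : ℕ | ∃ M : Finset (Sym2 V), IsMatchingSet G M ∧ M.card = n} := by
  refine ⟨Fintype.card (Sym2 V), ?_⟩
  rintro n ⟨M, -, rfl⟩
  exact M.card_le_univ.trans_eq Finset.card_univ

private lemma exists_stabSystem (G : SimpleGraph V) :
    ∃ S : Finset V, IsStableSet G S ∧ S.card = stabNum G := by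
  have h := Nat.sSup_mem (s := {n : ℕ | ∃ S : Finset V, IsStableSet G S ∧ S.card = n})
    ⟨0, ∅, by intro u hu; simp at hu, rfl⟩ (stab_bdd G)
  obtain ⟨S, hS, hc⟩ := h
  exact ⟨S, hS, hc⟩

private lemma card_le_stabNum {G : SimpleGraph V} {S : Finset V} (hS : IsStableSet G S) :
    S.card ≤ stabNum G :=
  le_csSup (stab_bdd G) ⟨S, hS, rfl⟩

private lemma exists_maxMatching (G : SimpleGraph V) :
    ∃ M : Finset (Sym2 V), IsMatchingSet G M ∧ M.card = matchNum G := by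
  have h := Nat.sSup_mem (s := {n : ℕ | ∃ M : Finset (Sym2 V), IsMatchingSet G M ∧ M.card = n})
    ⟨0, ∅, ⟨by simp, by intro e he; simp at he⟩, rfl⟩ (match_bdd G)
  obtain ⟨M, hM, hc⟩ := h
  exact ⟨M, hM, hc⟩

private lemma card_le_matchNum {G : SimpleGraph V} {M : Finset (Sym2 V)}
    (hM : IsMatchingSet G M) : M.card ≤ matchNum G :=
  le_csSup (match_bdd G) ⟨M, hM, rfl⟩

private lemma isStableSet_anti {G H : SimpleGraph V} (h : H ≤ G) {S : Finset V}
    (hS : IsStableSet G S) : IsStableSet H S :=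
  fun u hu v hv hadj => hS u hu v hv (h hadj)

private lemma stabNum_anti {G H : SimpleGraph V} (h : H ≤ G) : stabNum G ≤ stabNum H := by
  obtain ⟨S, hS, hc⟩ := exists_stabSystem G
  exact hc ▸ card_le_stabNum (isStableSet_anti h hS)

private lemma matchNum_mono {G H : SimpleGraph V} (h : H ≤ G) : matchNum H ≤ matchNum G := by
  obtain ⟨M, hM, hc⟩ := exists_maxMatching H
  refine hc ▸ card_le_matchNum ⟨hM.1.trans (SimpleGraph.edgeSet_subset_edgeSet.mpr h), hM.2⟩

/-- The Hall-type step in the proof of König's theorem: given a stable part `P`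
and a minimum vertex cover `C`, the vertices of `C ∩ P` can be matched
injectively to neighbours outside `C`. -/
private lemma hall_step (G : SimpleGraph V) {P C : Finset V} (hP : IsStableSet G P)
    (hC : _root_.IsVertexCover G C) (hmin : ∀ C', _root_.IsVertexCover G C' → C.card ≤ C'.card) :
    ∃ f : ↥(C ∩ P) → V, Function.Injective f ∧
      ∀ a : ↥(C ∩ P), G.Adj ↑a (f a) ∧ f a ∉ C := by
  classical
  set t : ↥(C ∩ P) → Finset V := fun a => Finset.univ.filter (fun b => G.Adj ↑a b ∧ b ∉ C)
    with ht
  have hall : ∀ s : Finset ↥(C ∩ P), s.card ≤ (s.biUnion t).card := by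
    intro s
    by_contra hlt
    push_neg at hlt
    set S : Finset V := s.image Subtype.val with hS
    have hScard : S.card = s.card := Finset.card_image_of_injective _ Subtype.val_injective
    have hSsub : S ⊆ C := by
      intro x hx
      rw [hS, Finset.mem_image] at hx
      obtain ⟨a, _, rfl⟩ := hx
      exact (Finset.mem_inter.mp a.2).1
    set NS : Finset V := s.biUnion t with hNS
    have key : ∀ u v : V, G.Adj u v → u ∈ C →
        u ∈ (C \ S) ∪ NS ∨ v ∈ (C \ S) ∪ NS := by
      intro u v huv hu
      by_cases hus : u ∈ S
      · rw [hS, Finset.mem_image] at hus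
        obtain ⟨a, ha, rfl⟩ := hus
        have haP : (↑a : V) ∈ P := (Finset.mem_inter.mp a.2).2
        by_cases hvC : v ∈ C
        · have hvS : v ∉ S := by
            intro hvS
            rw [hS, Finset.mem_image] at hvS
            obtain ⟨b, _, rfl⟩ := hvS
            exact hP _ haP _ (Finset.mem_inter.mp b.2).2 huv
          exact Or.inr (Finset.mem_union_left _ (Finset.mem_sdiff.mpr ⟨hvC, hvS⟩))
        · refine Or.inr (Finset.mem_union_right _ (Finset.mem_biUnion.mpr ⟨a, ha, ?_⟩))
          simp [ht, huv, hvC]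
      · exact Or.inl (Finset.mem_union_left _ (Finset.mem_sdiff.mpr ⟨hu, hus⟩))
    have hcov : _root_.IsVertexCover G ((C \ S) ∪ NS) := by
      intro u v huv
      rcases hC u v huv with hu | hv
      · exact key u v huv hu
      · exact (key v u huv.symm hv).symm
    have hcard1 : (C \ S).card = C.card - S.card := Finset.card_sdiff_of_subset hSsub
    have hcard2 : S.card ≤ C.card := Finset.card_le_card hSsub
    have hcard3 : ((C \ S) ∪ NS).card ≤ (C \ S).card + NS.card := Finset.card_union_le _ _
    have := hmin _ hcov
    omega
  obtain ⟨f, hfinj, hf⟩ := (Finset.all_card_le_biUnion_card_iff_exists_injective t).mp hall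
  refine ⟨f, hfinj, fun a => ?_⟩
  have := hf a
  rw [ht] at this
  simp only [Finset.mem_filter, Finset.mem_univ, true_and] at this
  exact this

private lemma cover_le_matchNum (G : SimpleGraph V) {A : Finset V}
    (hA : IsStableSet G A) (hAc : IsStableSet G Aᶜ)
    {C : Finset V} (hC : _root_.IsVertexCover G C)
    (hmin : ∀ C', _root_.IsVertexCover G C' → C.card ≤ C'.card) :
    C.card ≤ matchNum G := by
  classical
  obtain ⟨f, hfinj, hf⟩ := hall_step G hA hC hmin
  obtain ⟨g, hginj, hg⟩ := hall_step G hAc hC hmin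
  -- basic facts about the two partial matchings
  have haC : ∀ a : ↥(C ∩ A), (↑a : V) ∈ C := fun a => (Finset.mem_inter.mp a.2).1
  have haA : ∀ a : ↥(C ∩ A), (↑a : V) ∈ A := fun a => (Finset.mem_inter.mp a.2).2
  have hfC : ∀ a : ↥(C ∩ A), f a ∉ C := fun a => (hf a).2
  have hfA : ∀ a : ↥(C ∩ A), f a ∉ A := fun a ha =>
    hA _ (haA a) _ ha (hf a).1
  have hbC : ∀ b : ↥(C ∩ Aᶜ), (↑b : V) ∈ C := fun b => (Finset.mem_inter.mp b.2).1
  have hbA : ∀ b : ↥(C ∩ Aᶜ), (↑b : V) ∉ A := fun b =>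
    Finset.mem_compl.mp (Finset.mem_inter.mp b.2).2
  have hgC : ∀ b : ↥(C ∩ Aᶜ), g b ∉ C := fun b => (hg b).2
  have hgA : ∀ b : ↥(C ∩ Aᶜ), g b ∈ A := by
    intro b
    by_contra hgb
    exact hAc _ (Finset.mem_inter.mp b.2).2 _ (Finset.mem_compl.mpr hgb) (hg b).1
  set M1 : Finset (Sym2 V) :=
    Finset.univ.image (fun a : ↥(C ∩ A) => s((↑a : V), f a)) with hM1
  set M2 : Finset (Sym2 V) :=
    Finset.univ.image (fun b : ↥(C ∩ Aᶜ) => s((↑b : V), g b)) with hM2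
  have hmem1 : ∀ e ∈ M1, ∃ a : ↥(C ∩ A), e = s((↑a : V), f a) := by
    intro e he
    rw [hM1, Finset.mem_image] at he
    obtain ⟨a, _, rfl⟩ := he
    exact ⟨a, rfl⟩
  have hmem2 : ∀ e ∈ M2, ∃ b : ↥(C ∩ Aᶜ), e = s((↑b : V), g b) := by
    intro e he
    rw [hM2, Finset.mem_image] at he
    obtain ⟨b, _, rfl⟩ := he
    exact ⟨b, rfl⟩
  -- the matching
  have hmatch : IsMatchingSet G (M1 ∪ M2) := by
    constructor
    · intro e he
      rw [Finset.coe_union, Set.mem_union] at he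
      rcases he with he | he
      · obtain ⟨a, rfl⟩ := hmem1 e he
        exact (hf a).1
      · obtain ⟨b, rfl⟩ := hmem2 e he
        exact (hg b).1
    · intro e he e' he' hne v hv
      obtain ⟨hv1, hv2⟩ := hv
      rw [Finset.mem_union] at he he'
      have vert1 : ∀ (a : ↥(C ∩ A)) (x : Sym2 V), x = s((↑a : V), f a) → v ∈ x →
          v = (↑a : V) ∨ v = f a := by
        rintro a x rfl hx; exact Sym2.mem_iff.mp hx
      rcases he with he | he <;> rcases he' with he' | he'
      · obtain ⟨a, rfl⟩ := hmem1 e he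
        obtain ⟨a', rfl⟩ := hmem1 e' he'
        rcases Sym2.mem_iff.mp hv1 with rfl | rfl <;> rcases Sym2.mem_iff.mp hv2 with h2 | h2
        · exact hne (congrArg (fun x : ↥(C ∩ A) => s((↑x : V), f x)) (Subtype.ext h2))
        · exact hfC a' (h2 ▸ haC a)
        · exact hfC a (h2.symm ▸ haC a')
        · exact hne (congrArg (fun x : ↥(C ∩ A) => s((↑x : V), f x)) (hfinj h2))
      · obtain ⟨a, rfl⟩ := hmem1 e he
        obtain ⟨b, rfl⟩ := hmem2 e' he'
        rcases Sym2.mem_iff.mp hv1 with rfl | rfl <;> rcases Sym2.mem_iff.mp hv2 with h2 | h2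
        · exact hbA b (h2 ▸ haA a)
        · exact hgC b (h2 ▸ haC a)
        · exact hfC a (h2 ▸ hbC b)
        · exact hfA a (h2 ▸ hgA b)
      · obtain ⟨b, rfl⟩ := hmem2 e he
        obtain ⟨a, rfl⟩ := hmem1 e' he'
        rcases Sym2.mem_iff.mp hv1 with rfl | rfl <;> rcases Sym2.mem_iff.mp hv2 with h2 | h2
        · exact hbA b (h2 ▸ haA a)
        · exact hfC a (h2 ▸ hbC b)
        · exact hgC b (h2 ▸ haC a)
        · exact hfA a (h2.symm ▸ hgA b)
      · obtain ⟨b, rfl⟩ := hmem2 e he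
        obtain ⟨b', rfl⟩ := hmem2 e' he'
        rcases Sym2.mem_iff.mp hv1 with rfl | rfl <;> rcases Sym2.mem_iff.mp hv2 with h2 | h2
        · exact hne (congrArg (fun x : ↥(C ∩ Aᶜ) => s((↑x : V), g x)) (Subtype.ext h2))
        · exact hgC b' (h2 ▸ hbC b)
        · exact hgC b (h2.symm ▸ hbC b')
        · exact hne (congrArg (fun x : ↥(C ∩ Aᶜ) => s((↑x : V), g x)) (hginj h2))
  -- cardinality
  have hcard1 : M1.card = (C ∩ A).card := by
    rw [hM1, Finset.card_image_of_injective _ ?_, Finset.card_univ, Fintype.card_coe]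
    intro a a' h
    rcases Sym2.eq_iff.mp h with ⟨h1, _⟩ | ⟨h1, h2⟩
    · exact Subtype.ext h1
    · exact absurd (h1 ▸ haC a) (hfC a')
  have hcard2 : M2.card = (C ∩ Aᶜ).card := by
    rw [hM2, Finset.card_image_of_injective _ ?_, Finset.card_univ, Fintype.card_coe]
    intro b b' h
    rcases Sym2.eq_iff.mp h with ⟨h1, _⟩ | ⟨h1, h2⟩
    · exact Subtype.ext h1
    · exact absurd (h1 ▸ hbC b) (hgC b')
  have hdisj : Disjoint M1 M2 := by
    rw [Finset.disjoint_left]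
    intro e he1 he2
    obtain ⟨a, rfl⟩ := hmem1 e he1
    obtain ⟨b, hb⟩ := hmem2 _ he2
    rcases Sym2.eq_iff.mp hb with ⟨h1, _⟩ | ⟨h1, h2⟩
    · exact hbA b (h1 ▸ haA a)
    · exact hgC b (h1 ▸ haC a)
  have hCsplit : (C ∩ A).card + (C ∩ Aᶜ).card = C.card := by
    have h1 : C ∩ Aᶜ = C \ A := by
      ext x; simp [Finset.mem_sdiff, Finset.mem_compl]
    rw [h1]
    exact Finset.card_inter_add_card_sdiff C A
  calc C.card = (M1 ∪ M2).card := by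
        rw [Finset.card_union_of_disjoint hdisj, hcard1, hcard2, hCsplit]
    _ ≤ matchNum G := card_le_matchNum hmatch

/-- König–Egerváry / Gallai: in a bipartite graph, `μ(G) + α(G) = |V|`. -/
private lemma koenig (G : SimpleGraph V) {A : Finset V}
    (hA : IsStableSet G A) (hAc : IsStableSet G Aᶜ) :
    matchNum G + stabNum G = Fintype.card V := by
  classical
  -- upper bound : μ + α ≤ n
  obtain ⟨M, hM, hMcard⟩ := exists_maxMatching G
  obtain ⟨S, hS, hScard⟩ := exists_stabSystem G
  have h1 : matchNum G + stabNum G ≤ Fintype.card V := by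
    rw [← hMcard, ← hScard]
    have hex : ∀ e ∈ M, ∃ v, v ∈ e ∧ v ∉ S := by
      intro e he
      induction e with
      | h u v =>
        have hadj : G.Adj u v := G.mem_edgeSet.mp (hM.1 he)
        by_cases hu : u ∈ S
        · refine ⟨v, Sym2.mem_mk_right _ _, fun hv => hS u hu v hv hadj⟩
        · exact ⟨u, Sym2.mem_mk_left _ _, hu⟩
    have hMS : M.card ≤ (Finset.univ \ S).card := by
      set F : Sym2 V → V := fun e =>
        if h : ∃ v, v ∈ e ∧ v ∉ S then h.choose else (Quot.out e).1 with hF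
      refine Finset.card_le_card_of_injOn F ?_ ?_
      · intro e he
        have h := hex e he
        rw [hF]
        simp only [h, dif_pos]
        exact Finset.mem_sdiff.mpr ⟨Finset.mem_univ _, h.choose_spec.2⟩
      · intro e he e' he' hFe
        by_contra hne
        have h := hex e he
        have h' := hex e' he'
        have hve : F e ∈ e := by rw [hF]; simp only [h, dif_pos]; exact h.choose_spec.1
        have hve' : F e' ∈ e' := by rw [hF]; simp only [h', dif_pos]; exact h'.choose_spec.1
        exact hM.2 e he e' he' hne (F e) ⟨hve, hFe ▸ hve'⟩
    have : (Finset.univ \ S).card = Fintype.card V - S.card := by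
      rw [Finset.card_sdiff_of_subset (Finset.subset_univ S), Finset.card_univ]
    have hSle : S.card ≤ Fintype.card V := S.card_le_univ.trans_eq Finset.card_univ
    omega
  -- lower bound : μ + α ≥ n via a minimum vertex cover
  have hcovs : ((Finset.univ : Finset (Finset V)).filter (fun C => _root_.IsVertexCover G C)).Nonempty := by
    refine ⟨Finset.univ, Finset.mem_filter.mpr ⟨Finset.mem_univ _, fun u v _ => ?_⟩⟩
    exact Or.inl (Finset.mem_univ u)
  obtain ⟨C, hCmem, hCmin⟩ := Finset.exists_min_image _ Finset.card hcovs
  have hC : _root_.IsVertexCover G C := (Finset.mem_filter.mp hCmem).2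
  have hmin : ∀ C', _root_.IsVertexCover G C' → C.card ≤ C'.card := fun C' h =>
    hCmin C' (Finset.mem_filter.mpr ⟨Finset.mem_univ _, h⟩)
  have h2 : C.card ≤ matchNum G := cover_le_matchNum G hA hAc hC hmin
  have h3 : Fintype.card V - C.card ≤ stabNum G := by
    have hstab : IsStableSet G Cᶜ := by
      intro u hu v hv hadj
      rcases hC u v hadj with h | h
      · exact Finset.mem_compl.mp hu h
      · exact Finset.mem_compl.mp hv h
    have := card_le_stabNum hstab
    rwa [Finset.card_compl] at this
  have hCle : C.card ≤ Fintype.card V := C.card_le_univ.trans_eq Finset.card_univ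
  omega

/-- For an edge `uv`, the matching number is unchanged upon deletion iff some
maximum matching avoids `uv`. -/
private lemma matchNum_delete_iff (G : SimpleGraph V) {u v : V} (huv : G.Adj u v) :
    matchNum (G.deleteEdges {s(u, v)}) = matchNum G ↔
      ∃ M : Finset (Sym2 V), IsMaximumMatching G M ∧ s(u, v) ∉ M := by
  constructor
  · intro h
    obtain ⟨M, hM, hMcard⟩ := exists_maxMatching (G.deleteEdges {s(u, v)})
    have hsub : (↑M : Set (Sym2 V)) ⊆ G.edgeSet :=
      hM.1.trans (by rw [SimpleGraph.edgeSet_deleteEdges]; exact Set.diff_subset)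
    refine ⟨M, ⟨⟨hsub, hM.2⟩, by rw [hMcard, h]⟩, fun hmem => ?_⟩
    have := hM.1 hmem
    rw [SimpleGraph.edgeSet_deleteEdges] at this
    exact this.2 rfl
  · rintro ⟨M, ⟨hM, hMcard⟩, hnot⟩
    refine le_antisymm (matchNum_mono (SimpleGraph.deleteEdges_le _)) ?_
    rw [← hMcard]
    refine card_le_matchNum ⟨?_, hM.2⟩
    intro e he
    rw [SimpleGraph.edgeSet_deleteEdges]
    refine ⟨hM.1 he, ?_⟩
    intro h
    rw [Set.mem_singleton_iff] at h
    exact hnot (h ▸ he)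

end Aux

/-- For a connected bipartite graph `G`, the following are
equivalent: (i) `G` is α⁻-stable; (ii) `μ(G − e) = μ(G)` for every edge `e`;
(iii) the intersection of all maximum matchings of `G` is empty. -/
theorem stmt7 {V : Type*} [Fintype V] [DecidableEq V] (G : SimpleGraph V)
    (hc : G.Connected) (hbip : IsBipartiteGr G) :
    List.TFAE
      [ AlphaMinusStable G,
        ∀ u v : V, G.Adj u v → matchNum (G.deleteEdges {s(u, v)}) = matchNum G,
        (⋂ M ∈ {M : Finset (Sym2 V) | IsMaximumMatching G M}, (↑M : Set (Sym2 V))) = ∅ ] := by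
  classical
  obtain ⟨A, hA, hAc⟩ := hbip
  have key : ∀ u v : V, G.Adj u v →
      (stabNum (G.deleteEdges {s(u, v)}) = stabNum G ↔
        matchNum (G.deleteEdges {s(u, v)}) = matchNum G) := by
    intro u v huv
    have hle : G.deleteEdges {s(u, v)} ≤ G := SimpleGraph.deleteEdges_le _
    have k1 := koenig G hA hAc
    have k2 := koenig (G.deleteEdges {s(u, v)}) (isStableSet_anti hle hA)
      (isStableSet_anti hle hAc)
    have m1 := matchNum_mono hle
    have s1 := stabNum_anti hle
    omega
  tfae_have 1 ↔ 2 := by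
    constructor
    · intro h u v huv
      exact (key u v huv).mp (h u v huv)
    · intro h u v huv
      exact (key u v huv).mpr (h u v huv)
  tfae_have 2 ↔ 3 := by
    constructor
    · intro h
      rw [Set.eq_empty_iff_forall_notMem]
      intro x hx
      simp only [Set.mem_iInter, Set.mem_setOf_eq] at hx
      by_cases hxe : x ∈ G.edgeSet
      · induction x with
        | h u v =>
          have huv : G.Adj u v := G.mem_edgeSet.mp hxe
          obtain ⟨M, hM, hnot⟩ := (matchNum_delete_iff G huv).mp (h u v huv)
          exact hnot (hx M hM)
      · obtain ⟨M, hM, hMcard⟩ := exists_maxMatching G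
        exact hxe (hM.1 (hx M ⟨hM, hMcard⟩))
    · intro h u v huv
      rw [Set.eq_empty_iff_forall_notMem] at h
      have := h s(u, v)
      simp only [Set.mem_iInter, Set.mem_setOf_eq] at this
      push_neg at this
      obtain ⟨M, hM, hnot⟩ := this
      exact (matchNum_delete_iff G huv).mpr ⟨M, hM, hnot⟩
  tfae_finish
end

section
/- For a tree T of order at least two, the following assertions are equivalent: (i) T is an α⁺-stable path; (ii) T is isomorphic to the chordless path P_{2n} on 2n vertices for some n ≥ 1; (iii) the distance between any two pendant vertices of T is odd. -/
open Finset

variable {V : Type*}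

section AuxBasic

open SimpleGraph

variable {W : Type*}

lemma isStableSet_mono {G H : SimpleGraph V} (h : G ≤ H) {S : Finset V}
    (hS : IsStableSet H S) : IsStableSet G S :=
  fun u hu v hv hadj => hS u hu v hv (h hadj)

lemma stabNum_bddAbove (G : SimpleGraph V) [Fintype V] :
    BddAbove {n : ℕ | ∃ S : Finset V, IsStableSet G S ∧ S.card = n} := by
  refine ⟨Fintype.card V, ?_⟩
  rintro n ⟨S, -, rfl⟩
  exact S.card_le_univ.trans_eq Finset.card_univ

lemma le_stabNum (G : SimpleGraph V) [Fintype V] {S : Finset V} (h : IsStableSet G S) :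
    S.card ≤ stabNum G :=
  le_csSup (stabNum_bddAbove G) ⟨S, h, rfl⟩

lemma stabNum_le (G : SimpleGraph V) [Fintype V] {k : ℕ}
    (h : ∀ S : Finset V, IsStableSet G S → S.card ≤ k) : stabNum G ≤ k := by
  refine csSup_le ⟨0, ∅, fun u hu => absurd hu (Finset.notMem_empty u), rfl⟩ ?_
  rintro n ⟨S, hS, rfl⟩
  exact h S hS

lemma isStableSet_image [DecidableEq W] {G : SimpleGraph V} {H : SimpleGraph W}
    (e : G ≃g H) {S : Finset V} (h : IsStableSet G S) :
    IsStableSet H (S.image e) := by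
  intro x hx y hy hadj
  obtain ⟨a, ha, rfl⟩ := Finset.mem_image.1 hx
  obtain ⟨b, hb, rfl⟩ := Finset.mem_image.1 hy
  exact h a ha b hb (e.map_adj_iff.1 hadj)

lemma stabNum_iso [Fintype V] [Fintype W] {G : SimpleGraph V} {H : SimpleGraph W}
    (e : G ≃g H) : stabNum G = stabNum H := by
  classical
  apply le_antisymm
  · apply stabNum_le
    intro S hS
    have h1 := le_stabNum H (isStableSet_image e hS)
    rwa [Finset.card_image_of_injective _ e.injective] at h1
  · apply stabNum_le
    intro S hS
    have h1 := le_stabNum G (isStableSet_image e.symm hS)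
    rwa [Finset.card_image_of_injective _ e.symm.injective] at h1

lemma isPendant_iso {G : SimpleGraph V} {H : SimpleGraph W}
    (e : G ≃g H) {v : V} (h : IsPendant G v) : IsPendant H (e v) := by
  have himg : H.neighborSet (e v) = ⇑e '' G.neighborSet v := by
    ext w
    simp only [SimpleGraph.mem_neighborSet, Set.mem_image]
    constructor
    · intro hadj
      refine ⟨e.symm w, ?_, e.apply_symm_apply w⟩
      have : H.Adj (e v) (e (e.symm w)) := by rwa [e.apply_symm_apply]
      exact e.map_adj_iff.1 this
    · rintro ⟨a, ha, rfl⟩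
      exact e.map_adj_iff.2 ha
  unfold IsPendant at h ⊢
  rw [himg, Set.ncard_image_of_injective _ e.injective]
  exact h

lemma dist_le_iso {G : SimpleGraph V} {H : SimpleGraph W}
    (e : G ≃g H) (hc : G.Connected) (u v : V) :
    H.dist (e u) (e v) ≤ G.dist u v := by
  obtain ⟨p, hp⟩ := hc.exists_walk_length_eq_dist u v
  have h1 := SimpleGraph.dist_le (p.map e.toHom)
  rwa [SimpleGraph.Walk.length_map, hp] at h1

lemma dist_iso {G : SimpleGraph V} {H : SimpleGraph W}
    (e : G ≃g H) (hc : G.Connected) (u v : V) :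
    H.dist (e u) (e v) = G.dist u v := by
  refine le_antisymm (dist_le_iso e hc u v) ?_
  have hcH : H.Connected := e.connected_iff.1 hc
  have h1 := dist_le_iso e.symm hcH (e u) (e v)
  rwa [e.symm_apply_apply, e.symm_apply_apply] at h1

lemma alphaPlus_iso [Fintype V] [Fintype W] {G : SimpleGraph V} {H : SimpleGraph W}
    (e : G ≃g H) (h : AlphaPlusStable H) : AlphaPlusStable G := by
  intro u v huv hadj
  have h1 : stabNum (H ⊔ SimpleGraph.fromEdgeSet {s(e u, e v)}) = stabNum H :=
    h (e u) (e v) (fun hh => huv (e.injective hh))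
      (fun hh => hadj (e.map_adj_iff.1 hh))
  have e2 : (G ⊔ SimpleGraph.fromEdgeSet {s(u, v)}) ≃g
      (H ⊔ SimpleGraph.fromEdgeSet {s(e u, e v)}) := by
    refine ⟨e.toEquiv, ?_⟩
    intro a b
    simp only [SimpleGraph.sup_adj, SimpleGraph.fromEdgeSet_adj, Set.mem_singleton_iff,
      Sym2.eq_iff]
    constructor
    · rintro (h' | ⟨h' | h', hne⟩)
      · exact Or.inl (e.map_adj_iff.1 h')
      · exact Or.inr ⟨Or.inl ⟨e.injective h'.1, e.injective h'.2⟩,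
          fun hh => hne (congrArg e hh)⟩
      · exact Or.inr ⟨Or.inr ⟨e.injective h'.1, e.injective h'.2⟩,
          fun hh => hne (congrArg e hh)⟩
    · rintro (h' | ⟨h' | h', hne⟩)
      · exact Or.inl (e.map_adj_iff.2 h')
      · exact Or.inr ⟨Or.inl ⟨congrArg e h'.1, congrArg e h'.2⟩,
          fun hh => hne (e.injective hh)⟩
      · exact Or.inr ⟨Or.inr ⟨congrArg e h'.1, congrArg e h'.2⟩,
          fun hh => hne (e.injective hh)⟩
  rw [stabNum_iso e2, h1, stabNum_iso e]

end AuxBasic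


section AuxPath

open SimpleGraph

lemma pathGraph_conn {N : ℕ} (h : 0 < N) : (pathGraph N).Connected := by
  haveI : Nonempty (Fin N) := ⟨⟨0, h⟩⟩
  exact ⟨pathGraph_preconnected N⟩

lemma pathGraph_exists_walk {N : ℕ} : ∀ (k : ℕ) (a b : Fin N), a.val + k = b.val →
    ∃ p : (pathGraph N).Walk a b, p.length = k := by
  intro k
  induction k with
  | zero =>
    intro a b h
    have hab : a = b := Fin.ext (by omega)
    subst hab
    exact ⟨SimpleGraph.Walk.nil, rfl⟩
  | succ k ih =>
    intro a b h
    have hlt : a.val + 1 < N := by have := b.isLt; omega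
    have hadj : (pathGraph N).Adj a ⟨a.val + 1, hlt⟩ := pathGraph_adj.2 (Or.inl rfl)
    obtain ⟨q, hq⟩ := ih ⟨a.val + 1, hlt⟩ b (by show a.val + 1 + k = b.val; omega)
    exact ⟨SimpleGraph.Walk.cons hadj q, by simp [hq]⟩

lemma pathGraph_walk_bound {N : ℕ} {a b : Fin N} (p : (pathGraph N).Walk a b) :
    b.val ≤ a.val + p.length ∧ a.val ≤ b.val + p.length := by
  induction p with
  | nil => simp
  | cons h q ih =>
    rw [pathGraph_adj] at h
    rw [SimpleGraph.Walk.length_cons]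
    omega

lemma pathGraph_dist {N : ℕ} (hc : (pathGraph N).Connected) {a b : Fin N}
    (h : a.val ≤ b.val) : (pathGraph N).dist a b = b.val - a.val := by
  refine le_antisymm ?_ ?_
  · obtain ⟨p, hp⟩ := pathGraph_exists_walk (b.val - a.val) a b (by omega)
    exact hp ▸ SimpleGraph.dist_le p
  · obtain ⟨p, hp⟩ := hc.exists_walk_length_eq_dist a b
    have := pathGraph_walk_bound p
    omega

lemma pathGraph_neighbor_ncard {N : ℕ} (hN : 2 ≤ N) (v : Fin N) :
    ((pathGraph N).neighborSet v).ncard = if v.val = 0 ∨ v.val = N - 1 then 1 else 2 := by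
  have hvlt := v.isLt
  split_ifs with h
  · rcases h with h | h
    · have hs : (pathGraph N).neighborSet v = {(⟨1, by omega⟩ : Fin N)} := by
        ext w
        have hw := w.isLt
        simp only [SimpleGraph.mem_neighborSet, pathGraph_adj, Set.mem_singleton_iff,
          Fin.ext_iff]
        omega
      rw [hs]
      exact Set.ncard_singleton _
    · have hs : (pathGraph N).neighborSet v = {(⟨N - 2, by omega⟩ : Fin N)} := by
        ext w
        have hw := w.isLt
        simp only [SimpleGraph.mem_neighborSet, pathGraph_adj, Set.mem_singleton_iff,
          Fin.ext_iff]
        omega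
      rw [hs]
      exact Set.ncard_singleton _
  · push_neg at h
    have h0 : 0 < v.val := Nat.pos_of_ne_zero h.1
    have h1 : v.val < N - 1 := lt_of_le_of_ne (by omega) h.2
    have hs : (pathGraph N).neighborSet v =
        {(⟨v.val - 1, by omega⟩ : Fin N), (⟨v.val + 1, by omega⟩ : Fin N)} := by
      ext w
      have hw := w.isLt
      simp only [SimpleGraph.mem_neighborSet, pathGraph_adj, Set.mem_insert_iff,
        Set.mem_singleton_iff, Fin.ext_iff]
      omega
    rw [hs, Set.ncard_pair (by simp only [ne_eq, Fin.ext_iff]; omega)]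

lemma pathGraph_pendant_iff {N : ℕ} (hN : 2 ≤ N) (v : Fin N) :
    IsPendant (pathGraph N) v ↔ v.val = 0 ∨ v.val = N - 1 := by
  unfold IsPendant
  rw [pathGraph_neighbor_ncard hN]
  split_ifs with h
  · simpa using h
  · simp [h]

lemma pathGraph_pendant_ncard {N : ℕ} (hN : 2 ≤ N) :
    {v : Fin N | IsPendant (pathGraph N) v}.ncard = 2 := by
  have hset : {v : Fin N | IsPendant (pathGraph N) v} =
      {(⟨0, by omega⟩ : Fin N), (⟨N - 1, by omega⟩ : Fin N)} := by
    ext v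
    rw [Set.mem_setOf_eq, pathGraph_pendant_iff hN]
    simp [Fin.ext_iff]
  rw [hset, Set.ncard_pair (by simp only [ne_eq, Fin.ext_iff]; omega)]

lemma pathGraph_stable_card_le {N : ℕ} {S : Finset (Fin N)}
    (hS : IsStableSet (pathGraph N) S) : S.card ≤ (N + 1) / 2 := by
  classical
  have h := Finset.card_le_card_of_injOn (s := S) (fun v : Fin N => v.val / 2)
      (t := Finset.range ((N + 1) / 2))
      (fun v _ => by simp only [Finset.coe_range, Set.mem_Iio]; have := v.isLt; omega) ?_
  · simpa using h
  · intro a ha b hb hab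
    by_contra hne
    have h1 : a.val ≠ b.val := fun hh => hne (Fin.ext hh)
    simp only at hab
    have hadj : (pathGraph N).Adj a b := pathGraph_adj.2 (by omega)
    exact hS a (Finset.mem_coe.1 ha) b (Finset.mem_coe.1 hb) hadj

lemma pathGraph_progression {N n r : ℕ} (hbound : ∀ i, i < n → 2 * i + r < N) :
    ∃ S : Finset (Fin N), S.card = n ∧ (∀ v ∈ S, ∃ i < n, v.val = 2 * i + r) ∧
      IsStableSet (pathGraph N) S := by
  classical
  have hinj : Function.Injective
      (fun i : Fin n => (⟨2 * i.val + r, hbound i.val i.isLt⟩ : Fin N)) := by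
    intro i j hij
    have h := congrArg Fin.val hij
    simp only at h
    exact Fin.ext (by omega)
  refine ⟨Finset.univ.image (fun i : Fin n => (⟨2 * i.val + r, hbound i.val i.isLt⟩ : Fin N)),
    ?_, ?_, ?_⟩
  · rw [Finset.card_image_of_injective _ hinj, Finset.card_univ, Fintype.card_fin]
  · intro v hv
    obtain ⟨i, -, rfl⟩ := Finset.mem_image.1 hv
    exact ⟨i.val, i.isLt, rfl⟩
  · intro a ha b hb hadj
    obtain ⟨i, -, rfl⟩ := Finset.mem_image.1 ha
    obtain ⟨j, -, rfl⟩ := Finset.mem_image.1 hb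
    rw [pathGraph_adj] at hadj
    have hadj' : (2 * i.val + r) + 1 = 2 * j.val + r ∨ (2 * j.val + r) + 1 = 2 * i.val + r := hadj
    omega

lemma stabNum_pathGraph_even (n : ℕ) : stabNum (pathGraph (2 * n)) = n := by
  obtain ⟨S, hcard, -, hstab⟩ := pathGraph_progression (N := 2 * n) (n := n) (r := 1)
    (by omega)
  refine le_antisymm (stabNum_le _ fun S' hS' => ?_) (hcard.symm.trans_le (le_stabNum _ hstab))
  have := pathGraph_stable_card_le hS'
  omega

lemma alphaPlus_pathGraph_even (n : ℕ) : AlphaPlusStable (pathGraph (2 * n)) := by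
  intro u v huv hadj
  rw [stabNum_pathGraph_even]
  refine le_antisymm (stabNum_le _ fun S hS => ?_) ?_
  · have := pathGraph_stable_card_le (isStableSet_mono le_sup_left hS)
    omega
  · by_cases hodd : u.val % 2 = 1 ∧ v.val % 2 = 1
    · obtain ⟨S, hcard, hmem, hstab⟩ := pathGraph_progression (N := 2 * n) (n := n) (r := 0)
        (by omega)
      refine hcard.symm.trans_le (le_stabNum _ ?_)
      intro a ha b hb hadj'
      rcases hadj' with h' | h'
      · exact hstab a ha b hb h'
      · rw [SimpleGraph.fromEdgeSet_adj, Set.mem_singleton_iff, Sym2.eq_iff] at h'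
        obtain ⟨i, -, hi⟩ := hmem a ha
        obtain ⟨j, -, hj⟩ := hmem b hb
        rcases h'.1 with ⟨h1, h2⟩ | ⟨h1, h2⟩
        · have := congrArg Fin.val h1
          omega
        · have := congrArg Fin.val h1
          omega
    · obtain ⟨S, hcard, hmem, hstab⟩ := pathGraph_progression (N := 2 * n) (n := n) (r := 1)
        (by omega)
      refine hcard.symm.trans_le (le_stabNum _ ?_)
      intro a ha b hb hadj'
      rcases hadj' with h' | h'
      · exact hstab a ha b hb h'
      · rw [SimpleGraph.fromEdgeSet_adj, Set.mem_singleton_iff, Sym2.eq_iff] at h'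
        obtain ⟨i, -, hi⟩ := hmem a ha
        obtain ⟨j, -, hj⟩ := hmem b hb
        rcases h'.1 with ⟨h1, h2⟩ | ⟨h1, h2⟩
        · have hh1 := congrArg Fin.val h1
          have hh2 := congrArg Fin.val h2
          omega
        · have hh1 := congrArg Fin.val h1
          have hh2 := congrArg Fin.val h2
          omega

lemma pathGraph_odd_sup_bound {m : ℕ} (hm : 1 ≤ m) {u v : Fin (2 * m + 1)}
    (hu : u.val = 0) (hv : v.val = 2) {S : Finset (Fin (2 * m + 1))}
    (hS : IsStableSet (pathGraph (2 * m + 1) ⊔ SimpleGraph.fromEdgeSet {s(u, v)}) S) :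
    S.card ≤ m := by
  classical
  have hsplit := Finset.card_filter_add_card_filter_not
    (s := S) (p := fun w : Fin (2 * m + 1) => w.val < 3)
  have h1 : (S.filter (fun w : Fin (2 * m + 1) => w.val < 3)).card ≤ 1 := by
    refine Finset.card_le_one.2 ?_
    intro a ha b hb
    rw [Finset.mem_filter] at ha hb
    by_contra hab
    have hne' : a.val ≠ b.val := fun hh => hab (Fin.ext hh)
    have hadj : (pathGraph (2 * m + 1) ⊔ SimpleGraph.fromEdgeSet {s(u, v)}).Adj a b := by
      by_cases hd : a.val + 1 = b.val ∨ b.val + 1 = a.val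
      · exact Or.inl (pathGraph_adj.2 hd)
      · refine Or.inr ?_
        rw [SimpleGraph.fromEdgeSet_adj, Set.mem_singleton_iff, Sym2.eq_iff]
        refine ⟨?_, fun hh => hab hh⟩
        have hvv : (a.val = 0 ∧ b.val = 2) ∨ (a.val = 2 ∧ b.val = 0) := by
          have := ha.2
          have := hb.2
          omega
        rcases hvv with ⟨hh1, hh2⟩ | ⟨hh1, hh2⟩
        · exact Or.inl ⟨Fin.ext (by omega), Fin.ext (by omega)⟩
        · exact Or.inr ⟨Fin.ext (by omega), Fin.ext (by omega)⟩
    exact hS a ha.1 b hb.1 hadj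
  have h2 : (S.filter (fun w : Fin (2 * m + 1) => ¬ w.val < 3)).card ≤ m - 1 := by
    have hstab' := isStableSet_mono le_sup_left hS
    have hcle := Finset.card_le_card_of_injOn
      (s := S.filter (fun w : Fin (2 * m + 1) => ¬ w.val < 3))
      (fun w : Fin (2 * m + 1) => (w.val - 3) / 2)
      (t := Finset.range (m - 1)) ?_ ?_
    · simpa using hcle
    · intro a ha
      replace ha := Finset.mem_filter.1 (Finset.mem_coe.1 ha)
      have := a.isLt
      simp only [Finset.coe_range, Set.mem_Iio]
      omega
    · intro a ha b hb hab
      replace ha := Finset.mem_filter.1 (Finset.mem_coe.1 ha)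
      replace hb := Finset.mem_filter.1 (Finset.mem_coe.1 hb)
      by_contra hne'
      have h1' : a.val ≠ b.val := fun hh => hne' (Fin.ext hh)
      simp only at hab
      have hadj : (pathGraph (2 * m + 1)).Adj a b := pathGraph_adj.2 (by omega)
      exact hstab' a ha.1 b hb.1 hadj
  omega

lemma not_alphaPlus_pathGraph_odd (m : ℕ) (hm : 1 ≤ m) :
    ¬ AlphaPlusStable (pathGraph (2 * m + 1)) := by
  intro h
  have h2m : (2 : ℕ) < 2 * m + 1 := by omega
  have h0m : (0 : ℕ) < 2 * m + 1 := by omega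
  have hne : (⟨0, h0m⟩ : Fin (2 * m + 1)) ≠ ⟨2, h2m⟩ := by
    intro hh
    have := congrArg Fin.val hh
    simp at this
  have hnadj : ¬ (pathGraph (2 * m + 1)).Adj ⟨0, h0m⟩ ⟨2, h2m⟩ := by
    rw [pathGraph_adj]
    simp
  have heq := h _ _ hne hnadj
  have hpath : stabNum (pathGraph (2 * m + 1)) = m + 1 := by
    obtain ⟨S, hcard, -, hstab⟩ := pathGraph_progression (N := 2 * m + 1) (n := m + 1) (r := 0)
      (by omega)
    refine le_antisymm (stabNum_le _ fun S' hS' => ?_) (hcard.symm.trans_le (le_stabNum _ hstab))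
    have := pathGraph_stable_card_le hS'
    omega
  have hsup : stabNum (pathGraph (2 * m + 1) ⊔
      SimpleGraph.fromEdgeSet {s((⟨0, h0m⟩ : Fin (2 * m + 1)), (⟨2, h2m⟩ : Fin (2 * m + 1)))}) ≤ m :=
    stabNum_le _ fun S hS => pathGraph_odd_sup_bound hm rfl rfl hS
  omega

end AuxPath


section AuxTree

open SimpleGraph

variable [Fintype V] {T : SimpleGraph V}

lemma exists_neighbor (hc : T.Connected) (h2 : 2 ≤ Fintype.card V) (v : V) :
    (T.neighborSet v).Nonempty := by
  obtain ⟨w, hw⟩ := Fintype.exists_ne_of_one_lt_card (by omega) v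
  obtain ⟨p⟩ := hc.preconnected v w
  cases p with
  | nil => exact absurd rfl hw
  | cons h q => exact ⟨_, h⟩

lemma sum_ncard_neighbor (hT : T.IsTree) :
    ∑ v, (T.neighborSet v).ncard = 2 * (Fintype.card V - 1) := by
  classical
  letI : DecidableRel T.Adj := fun a b => Classical.dec _
  have hs := SimpleGraph.sum_degrees_eq_twice_card_edges T
  have hc := hT.card_edgeFinset
  have hdeg : ∀ v : V, T.degree v = (T.neighborSet v).ncard := by
    intro v
    rw [Set.ncard_eq_toFinset_card']
    rfl
  calc ∑ v, (T.neighborSet v).ncard = ∑ v, T.degree v :=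
        Finset.sum_congr rfl (fun v _ => (hdeg v).symm)
    _ = 2 * T.edgeFinset.card := hs
    _ = 2 * (Fintype.card V - 1) := by omega

lemma one_le_deg (hc : T.Connected) (h2 : 2 ≤ Fintype.card V) (v : V) :
    1 ≤ (T.neighborSet v).ncard :=
  (Set.ncard_pos (Set.toFinite _)).2 (exists_neighbor hc h2 v)

lemma tree_two_leaves (hT : T.IsTree) (h2 : 2 ≤ Fintype.card V) :
    2 ≤ {v : V | IsPendant T v}.ncard := by
  classical
  have hsum := sum_ncard_neighbor hT
  have hncard : {v : V | IsPendant T v}.ncard =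
      (Finset.univ.filter (fun v => IsPendant T v)).card := by
    rw [Set.ncard_eq_toFinset_card']
    congr 1
    ext v
    simp
  have hsplit := Finset.sum_filter_add_sum_filter_not Finset.univ
    (fun v => IsPendant T v) (fun v => (T.neighborSet v).ncard)
  have hb1 : (Finset.univ.filter (fun v => IsPendant T v)).card * 1 ≤
      ∑ v ∈ Finset.univ.filter (fun v => IsPendant T v), (T.neighborSet v).ncard := by
    rw [← smul_eq_mul]
    exact Finset.card_nsmul_le_sum _ _ _ (fun x _ => one_le_deg hT.isConnected h2 x)
  have hb2 : (Finset.univ.filter (fun v => ¬ IsPendant T v)).card * 2 ≤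
      ∑ v ∈ Finset.univ.filter (fun v => ¬ IsPendant T v), (T.neighborSet v).ncard := by
    rw [← smul_eq_mul]
    refine Finset.card_nsmul_le_sum _ _ _ (fun x hx => ?_)
    have h1 := one_le_deg hT.isConnected h2 x
    have h2' : ¬ IsPendant T x := (Finset.mem_filter.1 hx).2
    unfold IsPendant at h2'
    omega
  have hcards := Finset.card_filter_add_card_filter_not
    (s := Finset.univ) (p := fun v : V => IsPendant T v)
  rw [Finset.card_univ] at hcards
  omega

lemma tree_deg_le_two (hT : T.IsTree) (h2 : 2 ≤ Fintype.card V)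
    (hpend : {v : V | IsPendant T v}.ncard = 2) (x : V) :
    (T.neighborSet x).ncard ≤ 2 := by
  classical
  by_contra hx
  push_neg at hx
  have hsum := sum_ncard_neighbor hT
  have hncard : {v : V | IsPendant T v}.ncard =
      (Finset.univ.filter (fun v => IsPendant T v)).card := by
    rw [Set.ncard_eq_toFinset_card']
    congr 1
    ext v
    simp
  have hxnp : ¬ IsPendant T x := by unfold IsPendant; omega
  have hxQ : x ∈ Finset.univ.filter (fun v => ¬ IsPendant T v) := by
    simp [hxnp]
  have hsplit := Finset.sum_filter_add_sum_filter_not Finset.univ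
    (fun v => IsPendant T v) (fun v => (T.neighborSet v).ncard)
  have hsumP : ∑ v ∈ Finset.univ.filter (fun v => IsPendant T v), (T.neighborSet v).ncard =
      (Finset.univ.filter (fun v => IsPendant T v)).card := by
    calc ∑ v ∈ Finset.univ.filter (fun v => IsPendant T v), (T.neighborSet v).ncard
        = ∑ _v ∈ Finset.univ.filter (fun v => IsPendant T v), 1 :=
          Finset.sum_congr rfl (fun v hv => (Finset.mem_filter.1 hv).2)
      _ = (Finset.univ.filter (fun v => IsPendant T v)).card := by simp
  have herase := Finset.add_sum_erase (Finset.univ.filter (fun v => ¬ IsPendant T v))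
    (fun v => (T.neighborSet v).ncard) hxQ
  have hb : ((Finset.univ.filter (fun v => ¬ IsPendant T v)).erase x).card * 2 ≤
      ∑ v ∈ (Finset.univ.filter (fun v => ¬ IsPendant T v)).erase x, (T.neighborSet v).ncard := by
    rw [← smul_eq_mul]
    refine Finset.card_nsmul_le_sum _ _ _ (fun y hy => ?_)
    have h1 := one_le_deg hT.isConnected h2 y
    have h2' : ¬ IsPendant T y := (Finset.mem_filter.1 (Finset.mem_of_mem_erase hy)).2
    unfold IsPendant at h2'
    omega
  have hce := Finset.card_erase_of_mem hxQ
  have hcards := Finset.card_filter_add_card_filter_not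
    (s := Finset.univ) (p := fun v : V => IsPendant T v)
  rw [Finset.card_univ] at hcards
  have hQpos : 0 < (Finset.univ.filter (fun v => ¬ IsPendant T v)).card :=
    Finset.card_pos.2 ⟨x, hxQ⟩
  omega

lemma exists_pred (hc : T.Connected) {r v : V} (hne : v ≠ r) :
    ∃ w, T.Adj w v ∧ T.dist r w + 1 = T.dist r v := by
  obtain ⟨p, hp⟩ := hc.exists_walk_length_eq_dist r v
  obtain ⟨q', hq'⟩ : ∃ q : T.Walk v r, q.length = T.dist r v :=
    ⟨p.reverse, by rw [SimpleGraph.Walk.length_reverse, hp]⟩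
  cases q' with
  | nil => exact absurd rfl hne
  | @cons _ w _ hadj q =>
    rw [SimpleGraph.Walk.length_cons] at hq'
    have h1 : T.dist r w ≤ q.length := by
      have := SimpleGraph.dist_le q.reverse
      rwa [SimpleGraph.Walk.length_reverse] at this
    have h2 : T.dist r v ≤ T.dist r w + 1 := by
      have ht := hc.dist_triangle (u := r) (v := w) (w := v)
      rwa [SimpleGraph.dist_eq_one_iff_adj.2 hadj.symm] at ht
    exact ⟨w, hadj.symm, by omega⟩

lemma dist_lt_card (hc : T.Connected) (r v : V) : T.dist r v < Fintype.card V := by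
  obtain ⟨p, hp, hlen⟩ := hc.exists_path_of_dist r v
  exact hlen ▸ hp.length_lt

lemma adj_dist_le (hc : T.Connected) (r : V) {v w : V} (hadj : T.Adj v w) :
    T.dist r w ≤ T.dist r v + 1 := by
  have h := hc.dist_triangle (u := r) (v := v) (w := w)
  rwa [SimpleGraph.dist_eq_one_iff_adj.2 hadj] at h

lemma dist_injective (hT : T.IsTree) {r : V} (hr : IsPendant T r)
    (hdeg : ∀ v : V, (T.neighborSet v).ncard ≤ 2) :
    ∀ (k : ℕ) (v w : V), T.dist r v = k → T.dist r w = k → v = w := by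
  have hc := hT.isConnected
  intro k
  induction k with
  | zero =>
    intro v w hv hw
    have hv' : r = v := hc.dist_eq_zero_iff.1 hv
    have hw' : r = w := hc.dist_eq_zero_iff.1 hw
    exact hv'.symm.trans hw'
  | succ k ih =>
    intro v w hv hw
    by_contra hne
    have hvr : v ≠ r := by
      intro h
      subst h
      rw [SimpleGraph.dist_self] at hv
      omega
    have hwr : w ≠ r := by
      intro h
      subst h
      rw [SimpleGraph.dist_self] at hw
      omega
    obtain ⟨v', hv'adj, hv'⟩ := exists_pred hc hvr
    obtain ⟨w', hw'adj, hw'⟩ := exists_pred hc hwr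
    have hkv : T.dist r v' = k := by omega
    have hkw : T.dist r w' = k := by omega
    have hvw' : v' = w' := ih v' w' hkv hkw
    subst hvw'
    rcases Nat.eq_zero_or_pos k with hk0 | hk0
    · have hrv' : r = v' := hc.dist_eq_zero_iff.1 (by omega)
      subst hrv'
      have hsub : ({v, w} : Set V) ⊆ T.neighborSet r := by
        intro x hx
        rcases hx with rfl | rfl
        · exact hv'adj
        · exact hw'adj
      have hle := Set.ncard_le_ncard hsub (Set.toFinite _)
      rw [Set.ncard_pair hne] at hle
      unfold IsPendant at hr
      omega
    · have hv'r : v' ≠ r := by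
        intro h
        subst h
        rw [SimpleGraph.dist_self] at hkv
        omega
      obtain ⟨y, hyadj, hy⟩ := exists_pred hc hv'r
      have hyv : y ≠ v := by
        intro h
        subst h
        omega
      have hyw : y ≠ w := by
        intro h
        subst h
        omega
      have hsub : ({y, v, w} : Set V) ⊆ T.neighborSet v' := by
        intro x hx
        rcases hx with rfl | rfl | rfl
        · exact hyadj.symm
        · exact hv'adj
        · exact hw'adj
      have hle := Set.ncard_le_ncard hsub (Set.toFinite _)
      have h3 : ({y, v, w} : Set V).ncard = 3 := by
        rw [Set.ncard_insert_of_notMem (by simp [hyv, hyw]) (Set.toFinite _),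
          Set.ncard_pair hne]
      have := hdeg v'
      omega

lemma tree_adj_iff_dist (hT : T.IsTree) {r : V} (hr : IsPendant T r)
    (hdeg : ∀ v : V, (T.neighborSet v).ncard ≤ 2) (v w : V) :
    T.Adj v w ↔ (T.dist r v + 1 = T.dist r w ∨ T.dist r w + 1 = T.dist r v) := by
  have hc := hT.isConnected
  constructor
  · intro hadj
    have h1 := adj_dist_le hc r hadj
    have h2 := adj_dist_le hc r hadj.symm
    have hne : T.dist r v ≠ T.dist r w := fun h =>
      hadj.ne (dist_injective hT hr hdeg (T.dist r v) v w rfl h.symm)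
    omega
  · intro h
    rcases h with h | h
    · have hwr : w ≠ r := by
        intro hh
        subst hh
        rw [SimpleGraph.dist_self] at h
        omega
      obtain ⟨w', hadj, hw'⟩ := exists_pred hc hwr
      have heq : w' = v := dist_injective hT hr hdeg (T.dist r v) w' v (by omega) rfl
      rw [heq] at hadj
      exact hadj
    · have hvr : v ≠ r := by
        intro hh
        subst hh
        rw [SimpleGraph.dist_self] at h
        omega
      obtain ⟨v', hadj, hv'⟩ := exists_pred hc hvr
      have heq : v' = w := dist_injective hT hr hdeg (T.dist r w) v' w (by omega) rfl
      rw [heq] at hadj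
      exact hadj.symm

lemma tree_iso_path (hT : T.IsTree) (h2 : 2 ≤ Fintype.card V)
    (hpend : {v : V | IsPendant T v}.ncard = 2) :
    Nonempty (T ≃g SimpleGraph.pathGraph (Fintype.card V)) := by
  classical
  have hc := hT.isConnected
  have hdeg := tree_deg_le_two hT h2 hpend
  obtain ⟨r, hr⟩ := Set.nonempty_of_ncard_ne_zero (s := {v : V | IsPendant T v}) (by omega)
  have hr : IsPendant T r := hr
  let f : V → Fin (Fintype.card V) := fun v => ⟨T.dist r v, dist_lt_card hc r v⟩
  have hinj : Function.Injective f := by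
    intro a b hab
    have hval := congrArg Fin.val hab
    exact dist_injective hT hr hdeg (T.dist r a) a b rfl (congrArg Fin.val hab).symm
  have hbij : Function.Bijective f :=
    (Fintype.bijective_iff_injective_and_card f).2 ⟨hinj, by simp⟩
  refine ⟨⟨Equiv.ofBijective f hbij, ?_⟩⟩
  intro a b
  rw [SimpleGraph.pathGraph_adj]
  rw [tree_adj_iff_dist hT hr hdeg a b]
  exact Iff.rfl

lemma tree_adj_dist_ne (hT : T.IsTree) (r : V) {v w : V} (hadj : T.Adj v w) :
    T.dist r v ≠ T.dist r w := by
  classical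
  have hc := hT.isConnected
  intro heq
  obtain ⟨p, hp, hlen⟩ := hc.exists_path_of_dist r v
  by_cases hw : w ∈ p.support
  · have hsplit := p.take_spec hw
    have hlens := congrArg SimpleGraph.Walk.length hsplit
    rw [SimpleGraph.Walk.length_append] at hlens
    have h1 : T.dist r w ≤ (p.takeUntil w hw).length := SimpleGraph.dist_le _
    have h2 : (p.dropUntil w hw).length = 0 := by omega
    have := SimpleGraph.Walk.eq_of_length_eq_zero h2
    exact hadj.ne this.symm
  · have hq : ((SimpleGraph.Walk.cons hadj.symm p.reverse).reverse).IsPath := by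
      apply SimpleGraph.Walk.IsPath.reverse
      refine hp.reverse.cons ?_
      rwa [SimpleGraph.Walk.support_reverse, List.mem_reverse]
    obtain ⟨q, hq', hqlen⟩ := hc.exists_path_of_dist r w
    have huniq := hT.IsAcyclic.path_unique
      (⟨_, hq⟩ : T.Path r w) (⟨q, hq'⟩ : T.Path r w)
    have hlq := congrArg (fun x : T.Path r w => x.1.length) huniq
    simp only [SimpleGraph.Walk.length_reverse, SimpleGraph.Walk.length_cons] at hlq
    omega

lemma tree_walk_parity (hT : T.IsTree) (r : V) :
    ∀ {a b : V} (p : T.Walk a b), (p.length + T.dist r a + T.dist r b) % 2 = 0 := by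
  have hc := hT.isConnected
  intro a b p
  induction p with
  | nil => simp only [SimpleGraph.Walk.length_nil]; omega
  | @cons a x b hadj q ih =>
    have h1 : T.dist r a ≠ T.dist r x := tree_adj_dist_ne hT r hadj
    have h2 := adj_dist_le hc r hadj
    have h3 := adj_dist_le hc r hadj.symm
    rw [SimpleGraph.Walk.length_cons]
    omega

lemma tree_dist_parity (hT : T.IsTree) (r a b : V) :
    (T.dist a b + T.dist r a + T.dist r b) % 2 = 0 := by
  obtain ⟨p, hp⟩ := hT.isConnected.exists_walk_length_eq_dist a b
  have := tree_walk_parity hT r p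
  rwa [hp] at this

lemma leaves_le_two (hT : T.IsTree)
    (hodd : ∀ u v : V, IsPendant T u → IsPendant T v → u ≠ v → Odd (T.dist u v)) :
    {v : V | IsPendant T v}.ncard ≤ 2 := by
  classical
  by_contra h
  push_neg at h
  rw [Set.ncard_eq_toFinset_card'] at h
  obtain ⟨u, v, w, hu, hv, hw, huv, huw, hvw⟩ := Finset.two_lt_card_iff.1 h
  rw [Set.mem_toFinset] at hu hv hw
  have h1 := hodd u v hu hv huv
  have h2 := hodd v w hv hw hvw
  have h3 := hodd u w hu hw huw
  have hp := tree_dist_parity hT u v w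
  obtain ⟨k1, hk1⟩ := h1
  obtain ⟨k2, hk2⟩ := h2
  obtain ⟨k3, hk3⟩ := h3
  omega

end AuxTree

/-- For a tree `T` of order at least two, the following are
equivalent: (i) `T` is an α⁺-stable path; (ii) `T` is isomorphic to the path
`P_{2n}` for some `n ≥ 1`; (iii) the distance between any two pendant vertices
of `T` is odd. -/
theorem stmt8 {V : Type*} [Fintype V] (T : SimpleGraph V)
    (hT : T.IsTree) (h2 : 2 ≤ Fintype.card V) :
    List.TFAE
      [ AlphaPlusStable T ∧ {v : V | IsPendant T v}.ncard = 2,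
        ∃ n : ℕ, 1 ≤ n ∧ Nonempty (T ≃g SimpleGraph.pathGraph (2 * n)),
        ∀ u v : V, IsPendant T u → IsPendant T v → u ≠ v → Odd (T.dist u v) ] := by
  classical
  tfae_have 1 → 2 := by
    rintro ⟨halpha, hpend⟩
    obtain ⟨e⟩ := tree_iso_path hT h2 hpend
    rcases Nat.even_or_odd (Fintype.card V) with ⟨n, hn⟩ | ⟨m, hm⟩
    · refine ⟨n, by omega, ⟨?_⟩⟩
      have h2n : 2 * n = Fintype.card V := by omega
      rw [h2n]
      exact e
    · exfalso
      have halphaP : AlphaPlusStable (SimpleGraph.pathGraph (Fintype.card V)) :=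
        alphaPlus_iso e.symm halpha
      rw [hm] at halphaP
      exact not_alphaPlus_pathGraph_odd m (by omega) halphaP
  tfae_have 2 → 3 := by
    rintro ⟨n, hn, ⟨e⟩⟩
    intro u v hu hv huv
    have hcard : Fintype.card V = 2 * n := by
      have := Fintype.card_congr e.toEquiv
      simpa using this
    have hN : (2 : ℕ) ≤ 2 * n := by omega
    have hc := hT.isConnected
    have hdist := dist_iso e hc u v
    have hpu := isPendant_iso e hu
    have hpv := isPendant_iso e hv
    have h0u := (pathGraph_pendant_iff hN (e u)).1 hpu
    have h0v := (pathGraph_pendant_iff hN (e v)).1 hpv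
    have hneuv : (e u).val ≠ (e v).val := fun hh => huv (e.injective (Fin.ext hh))
    have hc2 : (SimpleGraph.pathGraph (2 * n)).Connected := pathGraph_conn (by omega)
    have hdval : (SimpleGraph.pathGraph (2 * n)).dist (e u) (e v) = 2 * n - 1 := by
      rcases h0u with h | h <;> rcases h0v with h' | h'
      · exact absurd (h.trans h'.symm) hneuv
      · rw [pathGraph_dist hc2 (by omega)]
        omega
      · rw [SimpleGraph.dist_comm, pathGraph_dist hc2 (by omega)]
        omega
      · exact absurd (h.trans h'.symm) hneuv
    have hfin : T.dist u v = 2 * n - 1 := by rw [← hdist, hdval]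
    rw [hfin]
    exact ⟨n - 1, by omega⟩
  tfae_have 3 → 1 := by
    intro h3
    have hge := tree_two_leaves hT h2
    have hle := leaves_le_two hT h3
    have hpend : {v : V | IsPendant T v}.ncard = 2 := le_antisymm hle hge
    refine ⟨?_, hpend⟩
    obtain ⟨e⟩ := tree_iso_path hT h2 hpend
    have hc2 : (SimpleGraph.pathGraph (Fintype.card V)).Connected := pathGraph_conn (by omega)
    have hpa : IsPendant T (e.symm ⟨0, by omega⟩) :=
      isPendant_iso e.symm ((pathGraph_pendant_iff h2 _).2 (Or.inl rfl))
    have hpb : IsPendant T (e.symm ⟨Fintype.card V - 1, by omega⟩) :=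
      isPendant_iso e.symm ((pathGraph_pendant_iff h2 _).2 (Or.inr rfl))
    have hab : e.symm ⟨0, by omega⟩ ≠ e.symm ⟨Fintype.card V - 1, by omega⟩ := by
      intro hh
      have h' := e.symm.injective hh
      have hval := congrArg Fin.val h'
      simp only at hval
      omega
    have hodd := h3 _ _ hpa hpb hab
    have hdd : T.dist (e.symm ⟨0, by omega⟩) (e.symm ⟨Fintype.card V - 1, by omega⟩) =
        Fintype.card V - 1 := by
      rw [dist_iso e.symm hc2, pathGraph_dist hc2 (by simp)]
      simp
    rw [hdd] at hodd
    obtain ⟨k, hk⟩ := hodd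
    have hNeven : Fintype.card V = 2 * (k + 1) := by omega
    have halphaP : AlphaPlusStable (SimpleGraph.pathGraph (Fintype.card V)) := by
      rw [hNeven]
      exact alphaPlus_pathGraph_even (k + 1)
    exact alphaPlus_iso e halphaP
  tfae_finish
end
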